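/- Let H be a graph and v a vertex of H such that some neighbor w of v is a simplicial vertex of H (N_H[w] is a clique). Then v is a shedding vertex of H: for every independent set S of H \ N_H[v], there exists x ∈ N_H(v) such that S ∪ {x} is independent in H \ {v}. -/
import Mathlib


open SimpleGraph

variable {V : Type*}

/-- `S` is an independent set of `G`: no two (distinct) members are adjacent. -/
def IsIndepOn (G : SimpleGraph V) (S : Set V) : Prop :=
  S.Pairwise fun u w => ¬ G.Adj u w

/-- The closed neighborhood `N_G[v]` of `v` in `G`. -/
def closedNbhd (G : SimpleGraph V) (v : V) : Set V :=
  {u | G.Adj v u} ∪ {v}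

/-- Vertex decomposability of the independence complex of the induced subgraph of `G`
on the vertex set `A`. -/
inductive VertexDecomp (G : SimpleGraph V) : Set V → Prop
  | discrete (A : Set V) (h : ∀ u ∈ A, ∀ w ∈ A, ¬ G.Adj u w) : VertexDecomp G A
  | shed (A : Set V) (v : V) (hv : v ∈ A)
      (hshed : ∀ S : Set V, S ⊆ A \ closedNbhd G v → IsIndepOn G S →
        ∃ x ∈ A, G.Adj v x ∧ IsIndepOn G (insert x S))
      (hdel : VertexDecomp G (A \ {v}))
      (hlink : VertexDecomp G (A \ closedNbhd G v)) : VertexDecomp G A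

/-- `v` is a shedding vertex of `H`: every independent set avoiding `N_H[v]` can be
extended by a neighbor of `v` to an independent set of `H \ {v}`. -/
def IsSheddingVertex (H : SimpleGraph V) (v : V) : Prop :=
  ∀ S : Set V, S ∩ closedNbhd H v = ∅ → IsIndepOn H S →
    ∃ x, H.Adj v x ∧ IsIndepOn H (insert x S)

theorem neighbor_of_simplicial_is_shedding {V : Type*}
    (H : SimpleGraph V) (v w : V) (hadj : H.Adj v w)
    (hsimp : H.IsClique (closedNbhd H w)) :
    IsSheddingVertex H v := by
  intro S hS hind
  have hSnotin : ∀ s ∈ S, s ∉ closedNbhd H v := by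
    intro s hs hc
    exact absurd (Set.mem_inter hs hc) (by simp [hS])
  have key : ∀ b ∈ S, ¬ H.Adj w b := by
    intro b hb habj
    have hbN : b ∈ closedNbhd H w := Or.inl habj
    have hvN : v ∈ closedNbhd H w := Or.inl (H.adj_symm hadj)
    have hvb : v ≠ b := by
      rintro rfl
      exact hSnotin v hb (Or.inr rfl)
    exact hSnotin b hb (Or.inl (hsimp hvN hbN hvb))
  refine ⟨w, hadj, ?_⟩
  intro a ha b hb hne
  rcases ha with heqa | ha
  · rcases hb with heqb | hb
    · exact absurd (heqa.trans heqb.symm) hne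
    · exact heqa ▸ key b hb
  · rcases hb with heqb | hb
    · intro habj
      exact key a ha (H.adj_symm (heqb ▸ habj))
    · exact hind ha hb hne
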